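/- Let E be a real vector space that is the internal direct sum of two subspaces W and Ŵ (E = W ⊕ Ŵ). Let Υ : E × E × E → ℝ be a trilinear map that is symmetric in its first two arguments. Then the following are equivalent: (i) there exists a trilinear map Z : E × E × E → ℝ, symmetric in its first two arguments, such that Z(α,α,α) = 0 for all α ∈ E (the gyroscopic condition) and Z(α,α,σ) = Υ(α,α,σ) for all α ∈ E and σ ∈ Ŵ (the kinetic matching condition); (ii) Υ(σ,σ,σ) = 0 for all σ ∈ Ŵ. -/

import Mathlib

/-- for `E = W ⊕ Ŵ` and `Υ` trilinear and symmetric in its first two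
arguments, there exists a trilinear `Z`, symmetric in its first two arguments, with
`Z(α,α,α) = 0` (gyroscopic condition) and `Z(α,α,σ) = Υ(α,α,σ)` for `σ ∈ Ŵ`
(kinetic matching condition) if and only if `Υ(σ,σ,σ) = 0` for all `σ ∈ Ŵ`. -/
theorem gyroscopic_solution_exists_iff_simple_kinetic_matching
    (E : Type*) [AddCommGroup E] [Module ℝ E]
    (W What : Submodule ℝ E) (hcompl : IsCompl W What)
    (Y : E →ₗ[ℝ] E →ₗ[ℝ] E →ₗ[ℝ] ℝ)
    (hYsymm : ∀ a b c : E, Y a b c = Y b a c) :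
    (∃ Z : E →ₗ[ℝ] E →ₗ[ℝ] E →ₗ[ℝ] ℝ,
        (∀ a b c : E, Z a b c = Z b a c) ∧
        (∀ a : E, Z a a a = 0) ∧
        (∀ a : E, ∀ σ ∈ What, Z a a σ = Y a a σ))
      ↔ (∀ σ ∈ What, Y σ σ σ = 0) := by
  constructor
  · rintro ⟨Z, _, hgyro, hmatch⟩ σ hσ
    rw [← hmatch σ σ hσ, hgyro σ]
  · intro hY
    set P : E →ₗ[ℝ] E := What.subtype ∘ₗ What.projectionOnto W hcompl.symm with hP
    set Q : E →ₗ[ℝ] E := W.subtype ∘ₗ W.projectionOnto What hcompl with hQ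
    have hQP : ∀ x : E, Q x + P x = x := fun x => by
      simpa [hP, hQ] using
        Submodule.projection_add_projection_eq_self hcompl x
    have hPleft : ∀ σ ∈ What, P σ = σ := fun σ hσ => by
      simp [hP, Submodule.projectionOnto_apply_of_mem_left hcompl.symm hσ]
    have hQright : ∀ σ ∈ What, Q σ = 0 := fun σ hσ => by
      simp [hQ, Submodule.projectionOnto_apply_of_mem_right hcompl hσ]
    have hPW : ∀ w ∈ W, P w = 0 := fun w hw => by
      simp [hP, Submodule.projectionOnto_apply_of_mem_right hcompl.symm hw]
    have hQW : ∀ w ∈ W, Q w = w := fun w hw => by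
      simp [hQ, Submodule.projectionOnto_apply_of_mem_left hcompl hw]
    -- The candidate gyroscopic tensor
    set g : E → E → (E →ₗ[ℝ] ℝ) := fun a b =>
      (Y a b).comp P
        - (1/2 : ℝ) • ((((Y (Q a)).flip (P b)).comp Q) + (((Y (Q b)).flip (P a)).comp Q))
        - ((((Y.flip (P a)).flip (P b)).comp Q) + (((Y.flip (P b)).flip (P a)).comp Q))
      with hg
    have hgapply : ∀ a b c : E, g a b c =
        Y a b (P c) - (1/2 : ℝ) * (Y (Q a) (Q c) (P b) + Y (Q b) (Q c) (P a))
          - (Y (Q c) (P a) (P b) + Y (Q c) (P b) (P a)) := by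
      intro a b c
      simp [hg]
      ring
    set Z : E →ₗ[ℝ] E →ₗ[ℝ] E →ₗ[ℝ] ℝ := LinearMap.mk₂ ℝ g
      (fun a a' b => by
        ext c
        simp only [hgapply, LinearMap.add_apply, map_add, LinearMap.add_apply]
        ring)
      (fun r a b => by
        ext c
        simp only [hgapply, LinearMap.smul_apply, map_smul, LinearMap.smul_apply,
          smul_eq_mul]
        ring)
      (fun a b b' => by
        ext c
        simp only [hgapply, LinearMap.add_apply, map_add, LinearMap.add_apply]
        ring)
      (fun a r b => by
        ext c
        simp only [hgapply, LinearMap.smul_apply, map_smul, LinearMap.smul_apply,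
          smul_eq_mul]
        ring)
      with hZ
    have hZapply : ∀ a b c : E, Z a b c =
        Y a b (P c) - (1/2 : ℝ) * (Y (Q a) (Q c) (P b) + Y (Q b) (Q c) (P a))
          - (Y (Q c) (P a) (P b) + Y (Q c) (P b) (P a)) := by
      intro a b c
      rw [hZ, LinearMap.mk₂_apply, hgapply]
    refine ⟨Z, ?_, ?_, ?_⟩
    · intro a b c
      rw [hZapply, hZapply, hYsymm a b]
      ring
    · intro a
      have hsW : (Q a : E) ∈ W := by
        simp [hQ, Submodule.coe_mem]
      have hsWhat : (P a : E) ∈ What := by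
        simp [hP, Submodule.coe_mem]
      rw [hZapply]
      have h1 : Y a a (P a) = Y (Q a) (Q a) (P a) + 2 * Y (Q a) (P a) (P a) := by
        conv_lhs => rw [← hQP a]
        simp [map_add, hPW _ hsW, hPleft _ hsWhat, hYsymm (P a) (Q a), hY (P a) hsWhat]
        ring
      rw [h1]
      ring
    · intro a σ hσ
      rw [hZapply, hPleft σ hσ, hQright σ hσ]
      simp
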